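/- Perfect elimination ordering recurrence: let G be a finite simple graph, v a simplicial vertex extension, i.e., G is obtained from G' by adding a vertex v whose neighborhood N(v) in G is a clique of G'. Then for any B ⊆ V(G), C_B(G; x, y) = C_B(G'; x, y) + x·y^{[v ∈ B]} · Π_{u ∈ N(v)} (1 + x·y^{[u ∈ B]}). -/

import Mathlib

open scoped Classical

/-- `C_B(G[W]; x, y)`: the sum of `x^{|K|} y^{|K ∩ B|}` over cliques `K` of `G`
contained in the window `W` (the clique polynomial of the induced subgraph `G[W]`). -/
noncomputable def biCliquePolyOn {V : Type*} [Fintype V] (G : SimpleGraph V)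
    (W B : Finset V) (x y : ℝ) : ℝ :=
  ∑ K ∈ Finset.univ.filter (fun K : Finset V => G.IsClique (K : Set V) ∧ K ⊆ W),
    x ^ K.card * y ^ (K ∩ B).card

/-- Perfect elimination ordering recurrence: if `G` (viewed on the window
`insert v W`) is obtained from `G' = G[W]` by adding a simplicial vertex `v ∉ W`
whose neighborhood inside `W` is a clique, then
`C_B(G;x,y) = C_B(G';x,y) + x·y^{[v∈B]} · Π_{u ∈ N(v)} (1 + x·y^{[u∈B]})`. -/
theorem biCliquePoly_simplicial_extension {V : Type*} [Fintype V] [DecidableEq V]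
    (G : SimpleGraph V) [DecidableRel G.Adj] (W B : Finset V) (v : V)
    (hv : v ∉ W)
    (hclique : G.IsClique ((G.neighborFinset v ∩ W : Finset V) : Set V))
    (hnbr : G.neighborFinset v ⊆ W) (x y : ℝ) :
    biCliquePolyOn G (insert v W) B x y
      = biCliquePolyOn G W B x y
        + x * y ^ (if v ∈ B then 1 else 0)
          * ∏ u ∈ G.neighborFinset v, (1 + x * y ^ (if u ∈ B then 1 else 0)) := by
  classical
  set S := G.neighborFinset v with hS
  have hScl : G.IsClique (S : Set V) := by
    have h : S ∩ W = S := Finset.inter_eq_left.mpr hnbr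
    simpa [h] using hclique
  have hvS : v ∉ S := by simp [hS]
  unfold biCliquePolyOn
  rw [← Finset.sum_filter_add_sum_filter_not (p := fun K : Finset V => v ∉ K)]
  congr 1
  · apply Finset.sum_congr _ (fun _ _ => rfl)
    ext K
    simp only [Finset.filter_filter, Finset.mem_filter, Finset.mem_univ, true_and]
    constructor
    · rintro ⟨⟨hcl, hsub⟩, hvK⟩
      refine ⟨hcl, fun u hu => ?_⟩
      rcases Finset.mem_insert.mp (hsub hu) with h | h
      · exact absurd (h ▸ hu) hvK
      · exact h
    · rintro ⟨hcl, hsub⟩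
      exact ⟨⟨hcl, hsub.trans (Finset.subset_insert _ _)⟩, fun h => hv (hsub h)⟩
  · -- cliques containing v ↔ subsets of S
    trans (∑ t ∈ S.powerset,
        x ^ (t.card + 1) * y ^ ((t ∩ B).card + (if v ∈ B then 1 else 0)))
    · refine Finset.sum_bij' (fun K _ => K.erase v) (fun t _ => insert v t)
        ?_ ?_ ?_ ?_ ?_
      · intro K hK
        simp only [Finset.mem_filter, Finset.mem_univ, true_and, not_not] at hK
        obtain ⟨⟨hcl, hsub⟩, hvK⟩ := hK
        refine Finset.mem_powerset.mpr fun u hu => ?_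
        have hune := Finset.ne_of_mem_erase hu
        have huK := Finset.mem_of_mem_erase hu
        have := hcl huK hvK hune
        rw [hS, SimpleGraph.mem_neighborFinset]
        exact this.symm
      · intro t ht
        rw [Finset.mem_powerset] at ht
        have hvt : v ∉ t := fun h => hvS (ht h)
        simp only [Finset.mem_filter, Finset.mem_univ, true_and, not_not]
        refine ⟨⟨?_, ?_⟩, Finset.mem_insert_self _ _⟩
        · rw [Finset.coe_insert]
          refine (hScl.subset (by exact_mod_cast ht)).insert fun b hb hne => ?_
          have : b ∈ S := ht hb
          rw [hS, SimpleGraph.mem_neighborFinset] at this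
          exact this
        · exact Finset.insert_subset_insert _ (ht.trans hnbr)
      · intro K hK
        simp only [Finset.mem_filter, not_not] at hK
        exact Finset.insert_erase hK.2
      · intro t ht
        rw [Finset.mem_powerset] at ht
        exact Finset.erase_insert (fun h => hvS (ht h))
      · intro K hK
        simp only [Finset.mem_filter, not_not] at hK
        have hvK := hK.2
        have hcard : K.card = (K.erase v).card + 1 :=
          (Finset.card_erase_add_one hvK).symm
        have hcard2 : (K ∩ B).card = ((K.erase v) ∩ B).card + (if v ∈ B then 1 else 0) := by
          by_cases hvB : v ∈ B
          · have : K ∩ B = insert v ((K.erase v) ∩ B) := by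
              ext u
              simp only [Finset.mem_inter, Finset.mem_insert, Finset.mem_erase]
              constructor
              · rintro ⟨h1, h2⟩
                by_cases h : u = v
                · exact Or.inl h
                · exact Or.inr ⟨⟨h, h1⟩, h2⟩
              · rintro (rfl | ⟨⟨_, h1⟩, h2⟩)
                · exact ⟨hvK, hvB⟩
                · exact ⟨h1, h2⟩
            rw [this, Finset.card_insert_of_notMem (by simp), if_pos hvB]
          · have : K ∩ B = (K.erase v) ∩ B := by
              ext u
              simp only [Finset.mem_inter, Finset.mem_erase]
              constructor
              · rintro ⟨h1, h2⟩
                exact ⟨⟨fun h => hvB (h ▸ h2), h1⟩, h2⟩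
              · rintro ⟨⟨_, h1⟩, h2⟩; exact ⟨h1, h2⟩
            rw [this, if_neg hvB, Nat.add_zero]
        rw [hcard]
        congr 1
        rw [← hcard2]
        congr!
    have hprod : ∏ u ∈ S, (1 + x * y ^ (if u ∈ B then 1 else 0))
        = ∑ t ∈ S.powerset, x ^ t.card * y ^ (t ∩ B).card := by
      have h1 : ∀ u ∈ S, (1 : ℝ) + x * y ^ (if u ∈ B then 1 else 0)
          = x * y ^ (if u ∈ B then 1 else 0) + 1 := fun u _ => add_comm _ _
      rw [Finset.prod_congr rfl h1, Finset.prod_add]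
      refine Finset.sum_congr rfl fun t ht => ?_
      rw [Finset.prod_const_one, mul_one, Finset.prod_mul_distrib, Finset.prod_const,
        Finset.prod_pow_eq_pow_sum]
      congr 1
      rw [← Finset.card_filter, Finset.filter_mem_eq_inter]
    rw [hprod, Finset.mul_sum]
    refine Finset.sum_congr rfl fun t ht => ?_
    rw [pow_add, pow_add, pow_one]
    ring
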